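/- Let E be a regular sublinear expectation on the space X of bounded measurable real-valued functions on (Ω, F) satisfying assumption (H₀) with constant bound M, with upper capacity C(A) := E(1_A) and lower capacity c(A) := −E(−1_A), and let {ξ_n}_{n≥1} ⊂ X be an independent sequence with respect to E. Fix ε > 0, δ > 0 and N ∈ ℕ such that for all m, n > N, c({ |Σ_{i=m}^{n} ξ_i| ≤ ε }) ≥ 1 − δ. Then C( { ω : sup_{k ≥ 1} |Σ_{i=N+1}^{N+k} ξ_i(ω)| > 2ε } ) ≤ (1 + M)δ, and consequently C( { ω : sup_{m,n > N} |Σ_{i=m}^{n} ξ_i(ω)| > 4ε } ) ≤ 2(1 + M)δ. -/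

import Mathlib

open MeasureTheory Set Filter Topology Classical

/-- The space of bounded measurable real-valued functions on `Ω`, as a submodule of `Ω → ℝ`. -/
def BM (Ω : Type*) [MeasurableSpace Ω] : Submodule ℝ (Ω → ℝ) where
  carrier := {f | Measurable f ∧ ∃ M : ℝ, ∀ ω, |f ω| ≤ M}
  zero_mem' := ⟨measurable_const, 0, by simp⟩
  add_mem' := by
    rintro f g ⟨hf, Mf, hMf⟩ ⟨hg, Mg, hMg⟩
    exact ⟨hf.add hg, Mf + Mg, fun ω => (abs_add_le _ _).trans (add_le_add (hMf ω) (hMg ω))⟩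
  smul_mem' := by
    rintro c f ⟨hf, Mf, hMf⟩
    refine ⟨hf.const_smul c, |c| * Mf, fun ω => ?_⟩
    simp only [Pi.smul_apply, smul_eq_mul, abs_mul]
    exact mul_le_mul_of_nonneg_left (hMf ω) (abs_nonneg c)

variable {Ω : Type*} [MeasurableSpace Ω]

lemma mem_BM {f : Ω → ℝ} (hf : Measurable f) (M : ℝ) (hM : ∀ ω, |f ω| ≤ M) : f ∈ BM Ω :=
  ⟨hf, M, hM⟩

lemma BM.measurable (ξ : BM Ω) : Measurable (ξ : Ω → ℝ) := ξ.2.1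

lemma BM.bounded (ξ : BM Ω) : ∃ M : ℝ, ∀ ω, |(ξ : Ω → ℝ) ω| ≤ M := ξ.2.2

/-- A sublinear expectation on the space of bounded measurable functions. -/
structure SLE (Ω : Type*) [MeasurableSpace Ω] where
  E : BM Ω → ℝ
  mono : ∀ ξ η : BM Ω, (∀ ω, (η : Ω → ℝ) ω ≤ (ξ : Ω → ℝ) ω) → E η ≤ E ξ
  const_preserve : ∀ (c : ℝ) (h : (fun _ : Ω => c) ∈ BM Ω), E ⟨fun _ => c, h⟩ = c
  subadd : ∀ ξ η : BM Ω, E (ξ + η) ≤ E ξ + E η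
  pos_homog : ∀ (c : ℝ), 0 ≤ c → ∀ ξ : BM Ω, E (c • ξ) = c * E ξ

/-- The constant function as an element of `BM Ω`. -/
def constBM (Ω : Type*) [MeasurableSpace Ω] (c : ℝ) : BM Ω :=
  ⟨fun _ => c, mem_BM measurable_const |c| fun _ => le_refl _⟩

/-- The indicator function of a measurable set as an element of `BM Ω`. -/
noncomputable def indBM {Ω : Type*} [MeasurableSpace Ω] (A : Set Ω) (hA : MeasurableSet A) : BM Ω :=
  ⟨A.indicator fun _ => 1,
    mem_BM (measurable_const.indicator hA) 1 fun ω => by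
      by_cases h : ω ∈ A <;> simp [Set.indicator_apply, h]⟩

/-- The product of two bounded measurable functions. -/
noncomputable def mulBM (ξ η : BM Ω) : BM Ω := by
  refine ⟨fun ω => (ξ : Ω → ℝ) ω * (η : Ω → ℝ) ω, ?_⟩
  obtain ⟨Mf, hMf⟩ := BM.bounded ξ
  obtain ⟨Mg, hMg⟩ := BM.bounded η
  refine mem_BM ((BM.measurable ξ).mul (BM.measurable η)) (max Mf 0 * max Mg 0) fun ω => ?_
  rw [abs_mul]
  exact mul_le_mul ((hMf ω).trans (le_max_left _ _)) ((hMg ω).trans (le_max_left _ _))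
    (abs_nonneg _) (le_max_right _ _)

/-- The upper capacity associated to a sublinear expectation: `C(A) = E(1_A)` for measurable `A`
(junk value `0` on non-measurable sets). -/
noncomputable def SLE.cap (𝔼 : SLE Ω) (A : Set Ω) : ℝ :=
  if h : MeasurableSet A then 𝔼.E (indBM A h) else 0

/-- The lower capacity associated to a sublinear expectation: `c(A) = -E(-1_A)` for measurable `A`
(junk value `0` on non-measurable sets). -/
noncomputable def SLE.lcap (𝔼 : SLE Ω) (A : Set Ω) : ℝ :=
  if h : MeasurableSet A then -𝔼.E (-(indBM A h)) else 0

/-- A linear expectation dominated by the sublinear expectation `𝔼`. -/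
def Dominated (𝔼 : SLE Ω) (L : BM Ω →ₗ[ℝ] ℝ) : Prop := ∀ ξ : BM Ω, L ξ ≤ 𝔼.E ξ

/-- `ξ` and `η` are uncorrelated with respect to `𝔼` if `L(ξη) = L(ξ)L(η)` for every
linear expectation `L` dominated by `𝔼`. -/
def Uncorrelated (𝔼 : SLE Ω) (ξ η : BM Ω) : Prop :=
  ∀ L : BM Ω →ₗ[ℝ] ℝ, Dominated 𝔼 L → L (mulBM ξ η) = L ξ * L η

/-- `𝔼` is regular: if `ξ n ↓ 0` pointwise then `𝔼.E (ξ n) ↓ 0`. -/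
def SLE.Regular (𝔼 : SLE Ω) : Prop :=
  ∀ ξ : ℕ → BM Ω, (∀ ω, Antitone fun n => (ξ n : Ω → ℝ) ω) →
    (∀ ω, Tendsto (fun n => (ξ n : Ω → ℝ) ω) atTop (𝓝 0)) →
    Tendsto (fun n => 𝔼.E (ξ n)) atTop (𝓝 0)

/-- The σ-field generated by `ξ a, …, ξ b`. -/
def sigmaGen (ξ : ℕ → BM Ω) (a b : ℕ) : MeasurableSpace Ω :=
  ⨆ i ∈ Set.Icc a b, MeasurableSpace.comap (fun ω => (ξ i : Ω → ℝ) ω) inferInstance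

/-- `{ξ_n}_{n ≥ 1}` is an independent sequence under `𝔼`: pairwise uncorrelated, and
`C(A ∩ B) ≤ C(A) C(B)` whenever `A ∈ σ(ξ_1, …, ξ_m)` and `B ∈ σ(ξ_{m+1}, …, ξ_n)`, `m < n`. -/
def IndepSeq (𝔼 : SLE Ω) (ξ : ℕ → BM Ω) : Prop :=
  (∀ i j, 1 ≤ i → 1 ≤ j → i ≠ j → Uncorrelated 𝔼 (ξ i) (ξ j)) ∧
  ∀ m n : ℕ, 1 ≤ m → m < n → ∀ A B : Set Ω,
    MeasurableSet[sigmaGen ξ 1 m] A → MeasurableSet[sigmaGen ξ (m + 1) n] B →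
    𝔼.cap (A ∩ B) ≤ 𝔼.cap A * 𝔼.cap B

/-- Assumption (H₀): for every disjoint measurable cover `{A_n}` of `Ω`,
the series `Σ C(A_n)` has bounded partial sums. -/
def H0 (𝔼 : SLE Ω) : Prop :=
  ∀ A : ℕ → Set Ω, (∀ n, MeasurableSet (A n)) → Pairwise (Function.onFun Disjoint A) →
    (⋃ n, A n) = Set.univ → ∃ M : ℝ, ∀ N : ℕ, ∑ n ∈ Finset.range N, 𝔼.cap (A n) < M

section Helpers

variable (𝔼 : SLE Ω)

lemma SLE.E_congr {ξ η : BM Ω} (h : ∀ ω, (ξ : Ω → ℝ) ω = (η : Ω → ℝ) ω) :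
    𝔼.E ξ = 𝔼.E η := by
  congr 1
  exact Subtype.ext (funext h)

lemma SLE.E_zero : 𝔼.E 0 = 0 := by
  have := 𝔼.pos_homog 0 le_rfl 0
  simpa using this

lemma SLE.E_const (c : ℝ) : 𝔼.E (constBM Ω c) = c := 𝔼.const_preserve c _

lemma SLE.E_add_const (ξ : BM Ω) (c : ℝ) : 𝔼.E (ξ + constBM Ω c) = 𝔼.E ξ + c := by
  refine le_antisymm ((𝔼.subadd _ _).trans (by rw [𝔼.E_const])) ?_
  have h := 𝔼.subadd (ξ + constBM Ω c) (constBM Ω (-c))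
  have he : 𝔼.E (ξ + constBM Ω c + constBM Ω (-c)) = 𝔼.E ξ :=
    𝔼.E_congr fun ω => by simp [constBM]
  rw [he, 𝔼.E_const] at h
  linarith

lemma SLE.cap_of_meas {A : Set Ω} (hA : MeasurableSet A) :
    𝔼.cap A = 𝔼.E (indBM A hA) := dif_pos hA

lemma SLE.E_ind_nonneg {A : Set Ω} (hA : MeasurableSet A) : 0 ≤ 𝔼.E (indBM A hA) := by
  rw [← 𝔼.E_zero]
  refine 𝔼.mono _ _ fun ω => ?_
  simp only [indBM]
  exact le_trans (by simp) (Set.indicator_nonneg (fun _ _ => zero_le_one) ω)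

lemma SLE.cap_nonneg (A : Set Ω) : 0 ≤ 𝔼.cap A := by
  unfold SLE.cap
  split
  · exact 𝔼.E_ind_nonneg _
  · exact le_rfl

lemma SLE.cap_empty : 𝔼.cap (∅ : Set Ω) = 0 := by
  rw [𝔼.cap_of_meas MeasurableSet.empty, ← 𝔼.E_zero]
  exact 𝔼.E_congr fun ω => by simp [indBM]

lemma SLE.cap_mono {A B : Set Ω} (hA : MeasurableSet A) (hB : MeasurableSet B)
    (h : A ⊆ B) : 𝔼.cap A ≤ 𝔼.cap B := by
  rw [𝔼.cap_of_meas hA, 𝔼.cap_of_meas hB]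
  refine 𝔼.mono _ _ fun ω => ?_
  exact Set.indicator_le_indicator_of_subset h (fun _ => zero_le_one) ω

lemma SLE.cap_split {A B : Set Ω} (hA : MeasurableSet A) (hB : MeasurableSet B) :
    𝔼.cap A ≤ 𝔼.cap (A ∩ B) + 𝔼.cap (A \ B) := by
  rw [𝔼.cap_of_meas hA, 𝔼.cap_of_meas (hA.inter hB), 𝔼.cap_of_meas (hA.diff hB)]
  have he : 𝔼.E (indBM A hA) = 𝔼.E (indBM (A ∩ B) (hA.inter hB) + indBM (A \ B) (hA.diff hB)) := by
    refine 𝔼.E_congr fun ω => ?_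
    by_cases h1 : ω ∈ A <;> by_cases h2 : ω ∈ B <;>
      simp [indBM, Set.indicator_apply, h1, h2]
  rw [he]
  exact 𝔼.subadd _ _

lemma SLE.cap_le_sum {A : Set Ω} (hA : MeasurableSet A) (f : ℕ → Set Ω)
    (hf : ∀ n, MeasurableSet (f n)) :
    ∀ s : Finset ℕ, A ⊆ ⋃ k ∈ s, f k → 𝔼.cap A ≤ ∑ k ∈ s, 𝔼.cap (f k) := by
  classical
  intro s
  induction s using Finset.induction generalizing A with
  | empty =>
    intro h
    simp only [Finset.notMem_empty, Set.iUnion_of_empty, Set.iUnion_empty,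
      Set.subset_empty_iff] at h
    simp [h, 𝔼.cap_empty]
  | @insert a s' hx ih =>
    intro h
    rw [Finset.sum_insert hx]
    have h1 : 𝔼.cap A ≤ 𝔼.cap (A ∩ f a) + 𝔼.cap (A \ f a) := 𝔼.cap_split hA (hf a)
    have h2 : 𝔼.cap (A ∩ f a) ≤ 𝔼.cap (f a) :=
      𝔼.cap_mono (hA.inter (hf a)) (hf a) Set.inter_subset_right
    have h3 : 𝔼.cap (A \ f a) ≤ ∑ k ∈ s', 𝔼.cap (f k) := by
      refine ih (hA.diff (hf a)) fun ω hω => ?_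
      have := h hω.1
      simp only [Set.mem_iUnion, Finset.mem_insert] at this ⊢
      obtain ⟨k, hk, hωk⟩ := this
      rcases hk with rfl | hk
      · exact absurd hωk hω.2
      · exact ⟨k, hk, hωk⟩
    linarith

lemma SLE.lcap_eq {A : Set Ω} (hA : MeasurableSet A) : 𝔼.lcap A = 1 - 𝔼.cap Aᶜ := by
  rw [SLE.lcap, dif_pos hA, 𝔼.cap_of_meas hA.compl]
  have he : 𝔼.E (-(indBM A hA)) = 𝔼.E (indBM Aᶜ hA.compl + constBM Ω (-1)) := by
    refine 𝔼.E_congr fun ω => ?_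
    by_cases h : ω ∈ A <;> simp [indBM, constBM, Set.indicator_apply, h]
  rw [he, 𝔼.E_add_const]
  ring

lemma measurable_sigmaGen {ξ : ℕ → BM Ω} {a b i : ℕ} (h : i ∈ Set.Icc a b) :
    Measurable[sigmaGen ξ a b] fun ω => (ξ i : Ω → ℝ) ω :=
  Measurable.of_comap_le (le_iSup₂ (f := fun i (_ : i ∈ Set.Icc a b) =>
    MeasurableSpace.comap (fun ω => (ξ i : Ω → ℝ) ω) inferInstance) i h)

lemma sigmaGen_le (ξ : ℕ → BM Ω) (a b : ℕ) : sigmaGen ξ a b ≤ ‹MeasurableSpace Ω› :=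
  iSup₂_le fun i _ => (BM.measurable (ξ i)).comap_le

end Helpers

/-- Tail capacity bounds for an independent sequence under a regular sublinear
expectation satisfying (H₀) with bound `M`. -/
theorem tail_sup_capacity_bound (𝔼 : SLE Ω) (hreg : 𝔼.Regular) (M : ℝ)
    (hH0 : ∀ A : ℕ → Set Ω, (∀ n, MeasurableSet (A n)) →
      Pairwise (Function.onFun Disjoint A) → (⋃ n, A n) = Set.univ →
      ∀ N : ℕ, ∑ n ∈ Finset.range N, 𝔼.cap (A n) < M)
    (ξ : ℕ → BM Ω) (hind : IndepSeq 𝔼 ξ)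
    (ε δ : ℝ) (hε : 0 < ε) (hδ : 0 < δ) (N : ℕ)
    (hc : ∀ m n, N < m → N < n → m ≤ n →
      1 - δ ≤ 𝔼.lcap {ω | |∑ i ∈ Finset.Icc m n, (ξ i : Ω → ℝ) ω| ≤ ε}) :
    𝔼.cap {ω | ∃ k, 1 ≤ k ∧
        2 * ε < |∑ i ∈ Finset.Icc (N + 1) (N + k), (ξ i : Ω → ℝ) ω|} ≤ (1 + M) * δ ∧
    𝔼.cap {ω | ∃ m n, N < m ∧ N < n ∧
        4 * ε < |∑ i ∈ Finset.Icc m n, (ξ i : Ω → ℝ) ω|} ≤ 2 * (1 + M) * δ := by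
  classical
  -- partial sums S k = ∑_{i=N+1}^{N+k} ξ i
  set S : ℕ → Ω → ℝ := fun k ω => ∑ i ∈ Finset.Icc (N + 1) (N + k), (ξ i : Ω → ℝ) ω with hSdef
  have hSmeas : ∀ k, Measurable (S k) := fun k =>
    Finset.measurable_sum _ fun i _ => BM.measurable (ξ i)
  have hS0 : ∀ ω, S 0 ω = 0 := fun ω => by simp [hSdef]
  have hSsplit : ∀ k n, k ≤ n → ∀ ω,
      S n ω = S k ω + ∑ i ∈ Finset.Icc (N + k + 1) (N + n), (ξ i : Ω → ℝ) ω := by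
    intro k n hkn ω
    simp only [hSdef, Finset.Icc_add_one_left_eq_Ioc]
    exact (Finset.sum_Ioc_consecutive _ (by omega) (by omega)).symm
  have hM0 : 0 < M := by
    have h := hH0 (fun k => if k = 0 then Set.univ else ∅)
      (fun k => by beta_reduce; split
                   · exact MeasurableSet.univ
                   · exact MeasurableSet.empty)
      (by
        intro i j hij
        simp only [Function.onFun]
        rcases Nat.eq_zero_or_pos j with rfl | hj
        · rw [if_neg (by omega)]; exact Set.empty_disjoint _
        · rw [if_neg (by omega : ¬ j = 0)]; exact Set.disjoint_empty _)
      (by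
        apply Set.eq_univ_iff_forall.2
        intro ω
        exact Set.mem_iUnion.2 ⟨0, by simp⟩) 0
    simpa using h
  -- the main sets
  set G : Set Ω := {ω | ∃ k, 1 ≤ k ∧ 2 * ε < |S k ω|} with hGdef
  set B : ℕ → Set Ω :=
    fun k => {ω | 2 * ε < |S k ω| ∧ ∀ j, 1 ≤ j → j < k → |S j ω| ≤ 2 * ε} with hBdef
  set Gn : ℕ → Set Ω := fun n => {ω | ∃ k, 1 ≤ k ∧ k ≤ n ∧ 2 * ε < |S k ω|} with hGndef
  set D : ℕ → Set Ω := fun n => {ω | ε < |S n ω|} with hDdef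
  set T : ℕ → ℕ → Set Ω :=
    fun k n => {ω | ε < |∑ i ∈ Finset.Icc (N + k + 1) (N + n), (ξ i : Ω → ℝ) ω|} with hTdef
  -- measurability
  have hDmeas : ∀ n, MeasurableSet (D n) := fun n =>
    measurableSet_lt measurable_const (hSmeas n).abs
  have hTmeasAmb : ∀ k n, MeasurableSet (T k n) := fun k n =>
    measurableSet_lt measurable_const
      ((Finset.measurable_sum _ fun i _ => BM.measurable (ξ i)).abs)
  have hBeq : ∀ k, B k = {ω | 2 * ε < |S k ω|} ∩
      ⋂ j, ⋂ (_ : 1 ≤ j), ⋂ (_ : j < k), {ω | |S j ω| ≤ 2 * ε} := by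
    intro k
    ext ω
    simp [hBdef, Set.mem_iInter]
  have hBmeas : ∀ (m : MeasurableSpace Ω) (k : ℕ), (∀ j, j ≤ k → Measurable[m] (S j)) →
      MeasurableSet[m] (B k) := by
    intro m k hm
    rw [hBeq k]
    refine MeasurableSet.inter (measurableSet_lt measurable_const (hm k le_rfl).abs) ?_
    refine MeasurableSet.iInter fun j => MeasurableSet.iInter fun _ =>
      MeasurableSet.iInter fun hj => ?_
    exact measurableSet_le (hm j hj.le).abs measurable_const
  have hBmeasAmb : ∀ k, MeasurableSet (B k) := fun k => hBmeas _ k fun j _ => hSmeas j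
  have hsumMeas : ∀ (m' : MeasurableSpace Ω) (s : Finset ℕ),
      (∀ i ∈ s, Measurable[m'] fun ω => (ξ i : Ω → ℝ) ω) →
      Measurable[m'] fun ω => ∑ i ∈ s, (ξ i : Ω → ℝ) ω := by
    intro m' s hs
    exact Finset.measurable_sum s hs
  have hBmeasGen : ∀ k, MeasurableSet[sigmaGen ξ 1 (N + k)] (B k) := by
    intro k
    refine hBmeas _ k fun j hj => ?_
    refine hsumMeas _ _ fun i hi => measurable_sigmaGen ?_
    simp only [Finset.mem_Icc] at hi
    exact ⟨by omega, by omega⟩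
  have hTmeas' : ∀ (m' : MeasurableSpace Ω) (k n : ℕ),
      Measurable[m'] (fun ω => ∑ i ∈ Finset.Icc (N + k + 1) (N + n), (ξ i : Ω → ℝ) ω) →
      MeasurableSet[m'] (T k n) := by
    intro m' k n h
    exact measurableSet_lt measurable_const h.abs
  have hTmeasGen : ∀ k n, MeasurableSet[sigmaGen ξ (N + k + 1) (N + n)] (T k n) := by
    intro k n
    refine hTmeas' _ k n (hsumMeas _ _ fun i hi => ?_)
    refine measurable_sigmaGen ?_
    simp only [Finset.mem_Icc] at hi
    exact ⟨by omega, by omega⟩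
  have hGnmeas : ∀ n, MeasurableSet (Gn n) := by
    intro n
    have he : Gn n = ⋃ k, ⋃ (_ : 1 ≤ k), ⋃ (_ : k ≤ n), {ω | 2 * ε < |S k ω|} := by
      ext ω; simp only [hGndef, Set.mem_setOf_eq, Set.mem_iUnion, exists_prop]
    rw [he]
    exact MeasurableSet.iUnion fun k => MeasurableSet.iUnion fun _ =>
      MeasurableSet.iUnion fun _ => measurableSet_lt measurable_const (hSmeas k).abs
  have hGmeas : MeasurableSet G := by
    have he : G = ⋃ k, ⋃ (_ : 1 ≤ k), {ω | 2 * ε < |S k ω|} := by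
      ext ω; simp [hGdef]
    rw [he]
    exact MeasurableSet.iUnion fun k => MeasurableSet.iUnion fun _ =>
      measurableSet_lt measurable_const (hSmeas k).abs
  -- capacity bounds from hc
  have hcapD : ∀ n, 1 ≤ n → 𝔼.cap (D n) ≤ δ := by
    intro n hn
    have h := hc (N + 1) (N + n) (by omega) (by omega) (by omega)
    have hmeas : MeasurableSet {ω | |S n ω| ≤ ε} :=
      measurableSet_le (hSmeas n).abs measurable_const
    have h' : 1 - δ ≤ 𝔼.lcap {ω | |S n ω| ≤ ε} := h
    rw [𝔼.lcap_eq hmeas] at h'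
    have hcompl : {ω | |S n ω| ≤ ε}ᶜ = D n := by
      ext ω; simp [hDdef, not_le]
    rw [hcompl] at h'
    linarith
  have hcapT : ∀ k n, k < n → 𝔼.cap (T k n) ≤ δ := by
    intro k n hkn
    have h := hc (N + k + 1) (N + n) (by omega) (by omega) (by omega)
    have hmeas : MeasurableSet
        {ω | |∑ i ∈ Finset.Icc (N + k + 1) (N + n), (ξ i : Ω → ℝ) ω| ≤ ε} :=
      measurableSet_le ((Finset.measurable_sum _ fun i _ => BM.measurable (ξ i)).abs)
        measurable_const
    rw [𝔼.lcap_eq hmeas] at h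
    have hcompl : {ω | |∑ i ∈ Finset.Icc (N + k + 1) (N + n), (ξ i : Ω → ℝ) ω| ≤ ε}ᶜ
        = T k n := by
      ext ω; simp [hTdef, not_le]
    rw [hcompl] at h
    linarith
  -- independence product bound
  have hprod : ∀ k n, 1 ≤ k → k < n → 𝔼.cap (B k ∩ T k n) ≤ 𝔼.cap (B k) * 𝔼.cap (T k n) :=
    fun k n hk hkn =>
      hind.2 (N + k) (N + n) (by omega) (by omega) _ _ (hBmeasGen k) (hTmeasGen k n)
  -- disjointness of first-passage sets and (H₀)
  have hBdisj : ∀ i j, i < j → Disjoint (B i) (B j) := by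
    intro i j hij
    rw [Set.disjoint_left]
    rintro ω h1 h2
    have h1' : 2 * ε < |S i ω| := h1.1
    have h2' : ∀ l, 1 ≤ l → l < j → |S l ω| ≤ 2 * ε := h2.2
    rcases Nat.eq_zero_or_pos i with rfl | hi
    · rw [hS0 ω] at h1'; simp at h1'; linarith
    · exact absurd h1' (not_lt.2 (h2' i hi hij))
  have hBunion_meas : MeasurableSet (⋃ k, B k) := MeasurableSet.iUnion fun k => hBmeasAmb k
  set A : ℕ → Set Ω := fun k => if k = 0 then (⋃ j, B j)ᶜ else B k with hAdef
  have hAmeas : ∀ k, MeasurableSet (A k) := by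
    intro k
    simp only [hAdef]
    split
    · exact hBunion_meas.compl
    · exact hBmeasAmb k
  have hAdisj : Pairwise (Function.onFun Disjoint A) := by
    have key : ∀ a b : ℕ, a < b → Disjoint (A a) (A b) := by
      intro a b hab
      simp only [hAdef]
      rcases Nat.eq_zero_or_pos a with rfl | ha
      · rw [if_pos rfl, if_neg (by omega : ¬ b = 0)]
        exact Set.disjoint_left.2 fun ω hω hωb => hω (Set.mem_iUnion.2 ⟨b, hωb⟩)
      · rw [if_neg (by omega : ¬ a = 0), if_neg (by omega : ¬ b = 0)]
        exact hBdisj a b hab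
    intro i j hij
    rcases lt_or_gt_of_ne hij with h | h
    · exact key i j h
    · exact (key j i h).symm
  have hAcover : (⋃ n, A n) = Set.univ := by
    ext ω
    simp only [Set.mem_iUnion, Set.mem_univ, iff_true]
    by_cases h : ω ∈ ⋃ j, B j
    · obtain ⟨j, hj⟩ := Set.mem_iUnion.1 h
      have hj2 : 2 * ε < |S j ω| := hj.1
      have hj1 : ¬ j = 0 := by
        rintro rfl
        rw [hS0 ω] at hj2; simp at hj2; linarith
      refine ⟨j, ?_⟩
      simp only [hAdef, if_neg hj1]
      exact hj
    · exact ⟨0, by simp only [hAdef, if_pos rfl]; exact h⟩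
  have hsumB : ∀ n : ℕ, ∑ i ∈ Finset.range n, 𝔼.cap (B (i + 1)) ≤ M := by
    intro n
    have h := hH0 A hAmeas hAdisj hAcover (n + 1)
    rw [Finset.sum_range_succ'] at h
    have h0 : 0 ≤ 𝔼.cap (A 0) := 𝔼.cap_nonneg _
    have he : ∀ i, 𝔼.cap (A (i + 1)) = 𝔼.cap (B (i + 1)) := fun i => by
      simp only [hAdef, if_neg (Nat.succ_ne_zero i)]
    rw [Finset.sum_congr rfl fun i _ => he i] at h
    linarith
  -- the finite-horizon bound
  have hGnBound : ∀ n, 𝔼.cap (Gn n) ≤ (1 + M) * δ := by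
    intro n
    rcases Nat.eq_zero_or_pos n with rfl | hn
    · have he : Gn 0 = ∅ := by
        ext ω; simp only [hGndef, Set.mem_setOf_eq, Set.mem_empty_iff_false, iff_false]
        rintro ⟨k, h1, h0, -⟩; omega
      rw [he, 𝔼.cap_empty]
      positivity
    have hcover : Gn n \ D n ⊆ ⋃ i ∈ Finset.range n, (B (i + 1) ∩ T (i + 1) n) := by
      rintro ω ⟨hω, hωD⟩
      obtain ⟨k, hk1, hkn, hk2⟩ := hω
      have hex : ∃ k, 1 ≤ k ∧ 2 * ε < |S k ω| := ⟨k, hk1, hk2⟩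
      set k0 := Nat.find hex with hk0def
      have hk0 := Nat.find_spec hex
      have hk0min : ∀ j, j < k0 → ¬(1 ≤ j ∧ 2 * ε < |S j ω|) := fun j hj => Nat.find_min hex hj
      have hk0le : k0 ≤ k := Nat.find_le ⟨hk1, hk2⟩
      have hωB : ω ∈ B k0 :=
        ⟨hk0.2, fun j hj1 hj2 => not_lt.1 fun hlt => (hk0min j hj2) ⟨hj1, hlt⟩⟩
      have hSn : |S n ω| ≤ ε := by
        by_contra hcon
        exact hωD (by simpa [hDdef, not_le] using hcon)
      have hωT : ω ∈ T k0 n := by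
        have hsplit := hSsplit k0 n (by omega) ω
        have h2 : |S k0 ω| - |S n ω| ≤ |S k0 ω - S n ω| := abs_sub_abs_le_abs_sub _ _
        have h3 : S k0 ω - S n ω
            = -(∑ i ∈ Finset.Icc (N + k0 + 1) (N + n), (ξ i : Ω → ℝ) ω) := by
          rw [hsplit]; ring
        rw [h3, abs_neg] at h2
        have : ε < |∑ i ∈ Finset.Icc (N + k0 + 1) (N + n), (ξ i : Ω → ℝ) ω| := by
          have := hk0.2
          linarith
        exact this
      refine Set.mem_biUnion (Finset.mem_range.2 (by omega : k0 - 1 < n)) ?_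
      have hke : k0 - 1 + 1 = k0 := by omega
      rw [hke]
      exact ⟨hωB, hωT⟩
    have step1 : 𝔼.cap (Gn n) ≤ 𝔼.cap (D n) + 𝔼.cap (Gn n \ D n) := by
      have h1 := 𝔼.cap_split (hGnmeas n) (hDmeas n)
      have h2 : 𝔼.cap (Gn n ∩ D n) ≤ 𝔼.cap (D n) :=
        𝔼.cap_mono ((hGnmeas n).inter (hDmeas n)) (hDmeas n) Set.inter_subset_right
      linarith
    have step2 : 𝔼.cap (Gn n \ D n) ≤ ∑ i ∈ Finset.range n, 𝔼.cap (B (i + 1) ∩ T (i + 1) n) :=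
      𝔼.cap_le_sum ((hGnmeas n).diff (hDmeas n)) (fun i => B (i + 1) ∩ T (i + 1) n)
        (fun i => (hBmeasAmb _).inter (hTmeasAmb _ _)) (Finset.range n) hcover
    have step3 : ∀ i ∈ Finset.range n, 𝔼.cap (B (i + 1) ∩ T (i + 1) n) ≤ 𝔼.cap (B (i + 1)) * δ := by
      intro i hi
      have hin : i + 1 ≤ n := Finset.mem_range.1 hi
      rcases eq_or_lt_of_le hin with heq | hlt
      · have hT : T (i + 1) n = ∅ := by
          ext ω
          simp only [hTdef, Set.mem_setOf_eq, Set.mem_empty_iff_false, iff_false, not_lt]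
          rw [← heq, Finset.Icc_eq_empty (by omega)]
          simp
          linarith
        rw [hT, Set.inter_empty, 𝔼.cap_empty]
        exact mul_nonneg (𝔼.cap_nonneg _) hδ.le
      · exact (hprod (i + 1) n (by omega) hlt).trans
          (mul_le_mul_of_nonneg_left (hcapT (i + 1) n hlt) (𝔼.cap_nonneg _))
    calc 𝔼.cap (Gn n) ≤ 𝔼.cap (D n) + ∑ i ∈ Finset.range n, 𝔼.cap (B (i + 1) ∩ T (i + 1) n) := by
          linarith
      _ ≤ δ + ∑ i ∈ Finset.range n, 𝔼.cap (B (i + 1)) * δ := by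
          refine add_le_add (hcapD n hn) (Finset.sum_le_sum step3)
      _ = δ + (∑ i ∈ Finset.range n, 𝔼.cap (B (i + 1))) * δ := by rw [Finset.sum_mul]
      _ ≤ δ + M * δ := by nlinarith [hsumB n]
      _ = (1 + M) * δ := by ring
  -- passage to the limit via regularity
  have hdiffmeas : ∀ n, MeasurableSet (G \ Gn n) := fun n => hGmeas.diff (hGnmeas n)
  have hcapG : 𝔼.cap G ≤ (1 + M) * δ := by
    set η : ℕ → BM Ω := fun n => indBM (G \ Gn n) (hdiffmeas n) with hηdef
    have hanti : ∀ ω, Antitone fun n => (η n : Ω → ℝ) ω := by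
      intro ω m n hmn
      simp only [hηdef, indBM]
      refine Set.indicator_le_indicator_of_subset ?_ (fun _ => zero_le_one) ω
      refine Set.diff_subset_diff_right ?_
      rintro x ⟨k, h1, h2, h3⟩
      exact ⟨k, h1, h2.trans hmn, h3⟩
    have htend0 : ∀ ω, Tendsto (fun n => (η n : Ω → ℝ) ω) atTop (𝓝 0) := by
      intro ω
      by_cases hω : ω ∈ G
      · obtain ⟨k, hk1, hk2⟩ := hω
        refine tendsto_atTop_of_eventually_const (i₀ := k) fun n hn => ?_
        simp only [hηdef, indBM]
        exact Set.indicator_of_notMem (fun hmem => hmem.2 ⟨k, hk1, hn, hk2⟩) _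
      · refine tendsto_atTop_of_eventually_const (i₀ := 0) fun n _ => ?_
        simp only [hηdef, indBM]
        exact Set.indicator_of_notMem (fun hmem => hω hmem.1) _
    have hlim := hreg η hanti htend0
    have hineq : ∀ n, 𝔼.cap G ≤ (1 + M) * δ + 𝔼.E (η n) := by
      intro n
      have h1 := 𝔼.cap_split hGmeas (hGnmeas n)
      have h2 : 𝔼.cap (G ∩ Gn n) ≤ 𝔼.cap (Gn n) :=
        𝔼.cap_mono (hGmeas.inter (hGnmeas n)) (hGnmeas n) Set.inter_subset_right
      have h3 : 𝔼.cap (G \ Gn n) = 𝔼.E (η n) := 𝔼.cap_of_meas (hdiffmeas n)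
      have h4 := hGnBound n
      linarith
    have hlim' : Tendsto (fun n => (1 + M) * δ + 𝔼.E (η n)) atTop (𝓝 ((1 + M) * δ + 0)) :=
      tendsto_const_nhds.add hlim
    rw [add_zero] at hlim'
    exact ge_of_tendsto' hlim' hineq
  refine ⟨hcapG, ?_⟩
  -- second statement
  have hset2meas : MeasurableSet {ω : Ω | ∃ m n, N < m ∧ N < n ∧
      4 * ε < |∑ i ∈ Finset.Icc m n, (ξ i : Ω → ℝ) ω|} := by
    have he : {ω : Ω | ∃ m n, N < m ∧ N < n ∧
        4 * ε < |∑ i ∈ Finset.Icc m n, (ξ i : Ω → ℝ) ω|}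
        = ⋃ m, ⋃ n, ⋃ (_ : N < m), ⋃ (_ : N < n),
          {ω | 4 * ε < |∑ i ∈ Finset.Icc m n, (ξ i : Ω → ℝ) ω|} := by
      ext ω
      simp only [Set.mem_setOf_eq, Set.mem_iUnion, exists_prop]
    rw [he]
    exact MeasurableSet.iUnion fun m => MeasurableSet.iUnion fun n =>
      MeasurableSet.iUnion fun _ => MeasurableSet.iUnion fun _ =>
        measurableSet_lt measurable_const
          ((Finset.measurable_sum _ fun i _ => BM.measurable (ξ i)).abs)
  have hsub : {ω : Ω | ∃ m n, N < m ∧ N < n ∧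
      4 * ε < |∑ i ∈ Finset.Icc m n, (ξ i : Ω → ℝ) ω|} ⊆ G := by
    rintro ω ⟨m, n, hm, hn, h4⟩
    have hmn : m ≤ n := by
      by_contra hmn
      rw [Finset.Icc_eq_empty (by omega)] at h4
      simp at h4
      linarith
    have hsplit : S (n - N) ω = S (m - 1 - N) ω
        + ∑ i ∈ Finset.Icc m n, (ξ i : Ω → ℝ) ω := by
      have h1 := hSsplit (m - 1 - N) (n - N) (by omega) ω
      rw [show N + (m - 1 - N) + 1 = m by omega, show N + (n - N) = n by omega] at h1
      exact h1
    have habs : 4 * ε < |S (n - N) ω| + |S (m - 1 - N) ω| := by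
      have heq : (∑ i ∈ Finset.Icc m n, (ξ i : Ω → ℝ) ω)
          = S (n - N) ω - S (m - 1 - N) ω := by linarith
      rw [heq] at h4
      have := abs_sub (S (n - N) ω) (S (m - 1 - N) ω)
      linarith
    by_cases hcase : 2 * ε < |S (n - N) ω|
    · exact ⟨n - N, by omega, hcase⟩
    · push_neg at hcase
      have h5 : 2 * ε < |S (m - 1 - N) ω| := by linarith
      have hk1 : 1 ≤ m - 1 - N := by
        by_contra hk
        have hz : m - 1 - N = 0 := by omega
        rw [hz, hS0 ω] at h5
        simp at h5
        linarith
      exact ⟨m - 1 - N, hk1, h5⟩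
  have := 𝔼.cap_mono hset2meas hGmeas hsub
  nlinarith [𝔼.cap_nonneg G]
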